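/- Let R be a G-graded algebra and p ∈ R a full homogeneous idempotent of degree 1_G, witnessed by homogeneous elements x₁,…,xₙ ∈ pR and y₁,…,yₙ ∈ Rp with |xᵢ| = −|yᵢ| (written additively) and Σᵢ yᵢ p xᵢ = 1. Define c = Σⱼ ε_{j,1} xⱼ and r = Σⱼ ε_{1,j} yⱼ in Mₙ(R). Then rc = ε_{1,1}·1, c is homogeneous with r homogeneous of opposite degree for the grading on Mₙ(R) induced by the weights dᵢ = |yᵢ|, and the map w ↦ c w r defines a ring homomorphism from ε_{1,1} Mₙ(R) ε_{1,1} to Mₙ(pRp). -/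

import Mathlib

/-- For a full homogeneous degree-zero idempotent `p` of a `G`-graded ring `R`,
witnessed by homogeneous `xᵢ ∈ pR`, `yᵢ ∈ Rp` with `|xᵢ| = -|yᵢ| = -dᵢ` and
`Σ yᵢ p xᵢ = 1`, the matrices `c = Σ ε_{j,1} xⱼ` and `r = Σ ε_{1,j} yⱼ` satisfy
`rc = ε_{1,1}`, are homogeneous of opposite degrees for the weighted grading, and
`w ↦ c w r` is a ring homomorphism `ε₁₁Mₙ(R)ε₁₁ → Mₙ(pRp)`. -/
theorem stmt_19 {G R : Type*} [AddCommGroup G] [Ring R]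
    (𝒜 : G → AddSubgroup R) [SetLike.GradedMonoid 𝒜]
    (p : R) (hp : p ∈ 𝒜 0) (hpp : p * p = p)
    {n : ℕ} (hn : 0 < n) (x y : Fin n → R) (d : Fin n → G)
    (hx : ∀ i, x i ∈ 𝒜 (-(d i))) (hxp : ∀ i, ∃ z, x i = p * z)
    (hy : ∀ i, y i ∈ 𝒜 (d i)) (hyp : ∀ i, ∃ z, y i = z * p)
    (hfull : ∑ i, y i * p * x i = 1)
    (c r : Matrix (Fin n) (Fin n) R)
    (hc : c = Matrix.of fun i j => if j = (⟨0, hn⟩ : Fin n) then x i else 0)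
    (hr : r = Matrix.of fun i j => if i = (⟨0, hn⟩ : Fin n) then y j else 0) :
    (r * c = Matrix.single (⟨0, hn⟩ : Fin n) (⟨0, hn⟩ : Fin n) 1) ∧
    -- `c` is homogeneous of degree `-d 0` and `r` of degree `d 0`
    (∀ i j, c i j ∈ 𝒜 (-(d (⟨0, hn⟩ : Fin n)) - d i + d j)) ∧
    (∀ i j, r i j ∈ 𝒜 (d (⟨0, hn⟩ : Fin n) - d i + d j)) ∧
    -- `w ↦ c w r` is a ring homomorphism from the corner `ε₁₁ Mₙ(R) ε₁₁` to `Mₙ(pRp)`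
    (∀ w w' : Matrix (Fin n) (Fin n) R,
      (∀ i j, (i ≠ (⟨0, hn⟩ : Fin n) ∨ j ≠ (⟨0, hn⟩ : Fin n)) → w i j = 0) →
      (∀ i j, (i ≠ (⟨0, hn⟩ : Fin n) ∨ j ≠ (⟨0, hn⟩ : Fin n)) → w' i j = 0) →
        c * (w + w') * r = c * w * r + c * w' * r ∧
        c * (w * w') * r = (c * w * r) * (c * w' * r)) ∧
    (∀ w : Matrix (Fin n) (Fin n) R,
      (∀ i j, (i ≠ (⟨0, hn⟩ : Fin n) ∨ j ≠ (⟨0, hn⟩ : Fin n)) → w i j = 0) →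
        ∀ i j, ∃ z, (c * w * r) i j = p * z * p) := by
  set e0 : Fin n := ⟨0, hn⟩ with he0
  have hyx : ∀ k, y k * x k = y k * p * x k := by
    intro k
    obtain ⟨z, hz⟩ := hxp k
    rw [hz]
    conv_rhs => rw [mul_assoc, ← mul_assoc p p z, hpp]
  have h1 : ∑ k, y k * x k = 1 := by
    rw [← hfull]; exact Finset.sum_congr rfl fun k _ => hyx k
  have key : ∀ w : Matrix (Fin n) (Fin n) R, ∀ i j,
      (c * w * r) i j = x i * w e0 e0 * y j := by
    intro w i j
    simp [hc, hr, Matrix.mul_apply, Finset.sum_mul, ite_mul, mul_ite,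
      Finset.sum_ite_eq, Finset.sum_ite_eq']
  refine ⟨?_, ?_, ?_, ?_, ?_⟩
  · ext i j
    rw [Matrix.mul_apply]
    simp only [hc, hr, Matrix.of_apply, Matrix.single, ite_mul, mul_ite,
      zero_mul, mul_zero, Matrix.of_apply]
    by_cases hi : i = e0 <;> by_cases hj : j = e0 <;>
      simp [hi, hj, h1, Matrix.single, and_comm, eq_comm]
  · intro i j
    rw [hc]
    simp only [Matrix.of_apply]
    by_cases hj : j = e0
    · subst hj
      simp only [if_pos rfl]
      have : -(d e0) - d i + d e0 = -(d i) := by abel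
      rw [this]; exact hx i
    · rw [if_neg hj]; exact zero_mem _
  · intro i j
    rw [hr]
    simp only [Matrix.of_apply]
    by_cases hi : i = e0
    · subst hi
      simp only [if_pos rfl]
      have : d e0 - d e0 + d j = d j := by abel
      rw [this]; exact hy j
    · rw [if_neg hi]; exact zero_mem _
  · intro w w' hw hw'
    constructor
    · ext i j
      simp [key, Matrix.add_apply, mul_add, add_mul]
    · ext i j
      rw [key]
      have hww : (w * w') e0 e0 = w e0 e0 * w' e0 e0 := by
        rw [Matrix.mul_apply]
        rw [Finset.sum_eq_single e0]
        · intro b _ hb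
          rw [hw e0 b (Or.inr hb), zero_mul]
        · intro h; exact absurd (Finset.mem_univ e0) h
      rw [hww, Matrix.mul_apply]
      have step : ∀ k, x i * w e0 e0 * y k * (x k * w' e0 e0 * y j)
          = x i * w e0 e0 * (y k * x k * (w' e0 e0 * y j)) := by
        intro k; simp only [mul_assoc]
      simp only [key, step]
      rw [← Finset.mul_sum, ← Finset.sum_mul, h1, one_mul]
      simp only [mul_assoc]
  · intro w hw i j
    obtain ⟨z, hz⟩ := hxp i
    obtain ⟨z', hz'⟩ := hyp j
    refine ⟨z * w e0 e0 * z', ?_⟩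
    rw [key, hz, hz']
    simp only [mul_assoc]
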